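/- Let σ: R → R be differentiable with |σ'(x)| ≤ M for all x, and suppose H^{(t+1)} = σ(∑_k A_k H^{(t)} W_k^{(t)}) applied entrywise, with each W_k^{(t)} entrywise bounded by β and A_k fixed n×n matrices. Then the absolute value of the partial derivative of the (v,q)-entry of H^{(ℓ+1)} with respect to the (u,p)-entry of H^{(0)} is at most (M d β)^{ℓ+1} ((∑_k |A_k|)^{ℓ+1})_{v,u}. -/

import Mathlib

open Matrix BigOperators

theorem oversquashing_sensitivity_bound_with_activation
    (n d K : ℕ) (A : Fin K → Matrix (Fin n) (Fin n) ℝ)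
    (Wmat : ℕ → Fin K → Matrix (Fin d) (Fin d) ℝ) (β M : ℝ)
    (hβ : ∀ t k p q, |Wmat t k p q| ≤ β)
    (σ : ℝ → ℝ) (hσ : Differentiable ℝ σ) (hσ' : ∀ x, |deriv σ x| ≤ M)
    (F : ℕ → Matrix (Fin n) (Fin d) ℝ → Matrix (Fin n) (Fin d) ℝ)
    (hF0 : ∀ X, F 0 X = X)
    (hFs : ∀ t X, F (t + 1) X = (∑ k, A k * F t X * Wmat t k).map σ)
    (ℓ : ℕ) (H0 : Matrix (Fin n) (Fin d) ℝ) (v u : Fin n) (q p : Fin d) (c : ℝ)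
    (hderiv : HasDerivAt
      (fun t : ℝ => F (ℓ + 1) (H0 + t • Matrix.single u p 1) v q) c 0) :
    |c| ≤ (M * (d : ℝ) * β) ^ (ℓ + 1) *
      ((∑ k, (A k).map (fun x => |x|)) ^ (ℓ + 1)) v u := by
  set E := Matrix.single u p (1:ℝ) with hE
  set P := ∑ k, (A k).map (fun x => |x|) with hP
  have hM : 0 ≤ M := le_trans (abs_nonneg _) (hσ' 0)
  have hPapp : ∀ (a : Fin n) (b : Fin n), P a b = ∑ k, |A k a b| := by
    intro a b
    simp [hP, Matrix.sum_apply, Matrix.map_apply]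
  have key : ∀ t : ℕ, ∃ C : Fin n → Fin d → ℝ,
      (∀ v q, HasDerivAt (fun s : ℝ => F t (H0 + s • E) v q) (C v q) 0) ∧
      (∀ v q, |C v q| ≤ (M * d * β) ^ t * (P ^ t) v u) := by
    intro t
    induction t with
    | zero =>
      refine ⟨fun v q => E v q, ?_, ?_⟩
      · intro v q
        have h1 : (fun s : ℝ => F 0 (H0 + s • E) v q)
            = fun s : ℝ => H0 v q + s * E v q := by
          funext s
          rw [hF0]
          simp [Matrix.add_apply, Matrix.smul_apply, smul_eq_mul]
        rw [h1]
        simpa using ((hasDerivAt_id (0:ℝ)).mul_const (E v q)).const_add (H0 v q)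
      · intro v q
        simp only [pow_zero, Matrix.one_apply, one_mul]
        by_cases hv : v = u
        · subst hv
          simp only [if_pos rfl]
          by_cases hq : q = p
          · subst hq; simp [hE, Matrix.single_apply_same]
          · simp [hE, Matrix.single, Ne.symm hq]
        · simp [hE, Matrix.single, Ne.symm hv, hv]
    | succ t ih =>
      obtain ⟨C, hC, hCb⟩ := ih
      have hbnn : ∀ w : Fin n, 0 ≤ (M * d * β) ^ t * (P ^ t) w u :=
        fun w => (abs_nonneg _).trans (hCb w q)
      refine ⟨fun v q =>
        deriv σ (∑ k, ∑ j, (∑ w, A k v w * F t H0 w j) * Wmat t k j q) *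
          (∑ k, ∑ j, (∑ w, A k v w * C w j) * Wmat t k j q), ?_, ?_⟩
      · intro v q
        have h1 : (fun s : ℝ => F (t+1) (H0 + s • E) v q)
            = (fun s : ℝ => σ (∑ k, ∑ j, (∑ w, A k v w * F t (H0 + s • E) w j) * Wmat t k j q)) := by
          funext s
          rw [hFs]
          simp [Matrix.map_apply, Matrix.sum_apply, Matrix.mul_apply]
        rw [h1]
        have hg : HasDerivAt
            (fun s : ℝ => ∑ k, ∑ j, (∑ w, A k v w * F t (H0 + s • E) w j) * Wmat t k j q)
            (∑ k, ∑ j, (∑ w, A k v w * C w j) * Wmat t k j q) 0 := by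
          apply HasDerivAt.fun_sum
          intro k _
          apply HasDerivAt.fun_sum
          intro j _
          exact (HasDerivAt.fun_sum (fun w _ => (hC w j).const_mul (A k v w))).mul_const _
        have h0 : (∑ k, ∑ j, (∑ w, A k v w * F t (H0 + (0:ℝ) • E) w j) * Wmat t k j q)
            = ∑ k, ∑ j, (∑ w, A k v w * F t H0 w j) * Wmat t k j q := by
          simp
        have hσd : HasDerivAt σ
            (deriv σ (∑ k, ∑ j, (∑ w, A k v w * F t H0 w j) * Wmat t k j q))
            (∑ k, ∑ j, (∑ w, A k v w * F t (H0 + (0:ℝ) • E) w j) * Wmat t k j q) := by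
          rw [h0]
          exact (hσ _).hasDerivAt
        exact hσd.comp 0 hg
      · intro v q
        have hD : |∑ k, ∑ j, (∑ w, A k v w * C w j) * Wmat t k j q|
            ≤ (d : ℝ) * ((M * d * β) ^ t * (P ^ (t+1)) v u) * β := by
          calc |∑ k, ∑ j, (∑ w, A k v w * C w j) * Wmat t k j q|
              ≤ ∑ k, |∑ j, (∑ w, A k v w * C w j) * Wmat t k j q| :=
                Finset.abs_sum_le_sum_abs _ _
            _ ≤ ∑ k, ∑ j, |(∑ w, A k v w * C w j) * Wmat t k j q| :=
                Finset.sum_le_sum (fun k _ => Finset.abs_sum_le_sum_abs _ _)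
            _ ≤ ∑ k : Fin K, ∑ j : Fin d,
                  (∑ w, |A k v w| * ((M * d * β) ^ t * (P ^ t) w u)) * β := by
                apply Finset.sum_le_sum
                intro k _
                apply Finset.sum_le_sum
                intro j _
                rw [abs_mul]
                apply mul_le_mul _ (hβ t k j q) (abs_nonneg _)
                · exact Finset.sum_nonneg fun w _ => mul_nonneg (abs_nonneg _) (hbnn w)
                · calc |∑ w, A k v w * C w j| ≤ ∑ w, |A k v w * C w j| :=
                        Finset.abs_sum_le_sum_abs _ _
                    _ ≤ ∑ w, |A k v w| * ((M * d * β) ^ t * (P ^ t) w u) := by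
                        apply Finset.sum_le_sum
                        intro w _
                        rw [abs_mul]
                        exact mul_le_mul_of_nonneg_left (hCb w j) (abs_nonneg _)
            _ = (d : ℝ) * ((M * d * β) ^ t * (P ^ (t+1)) v u) * β := by
                have hPs : (P ^ (t+1)) v u = ∑ w, P v w * (P ^ t) w u := by
                  rw [pow_succ']
                  simp [Matrix.mul_apply]
                have hL : ∀ k : Fin K,
                    (∑ j : Fin d, (∑ w, |A k v w| * ((M * d * β) ^ t * (P ^ t) w u)) * β)
                    = ∑ w, (d : ℝ) * (|A k v w| * ((M * d * β) ^ t * (P ^ t) w u) * β) := by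
                  intro k
                  rw [Finset.sum_const, Finset.card_univ, Fintype.card_fin, nsmul_eq_mul,
                    Finset.sum_mul, Finset.mul_sum]
                rw [Finset.sum_congr rfl fun k _ => hL k, Finset.sum_comm, hPs]
                simp only [Finset.mul_sum, Finset.sum_mul, hPapp]
                exact Finset.sum_congr rfl fun w _ =>
                  Finset.sum_congr rfl fun k _ => by ring
        calc |deriv σ (∑ k, ∑ j, (∑ w, A k v w * F t H0 w j) * Wmat t k j q) *
              (∑ k, ∑ j, (∑ w, A k v w * C w j) * Wmat t k j q)|
            = |deriv σ _| * |∑ k, ∑ j, (∑ w, A k v w * C w j) * Wmat t k j q| := abs_mul _ _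
          _ ≤ M * ((d : ℝ) * ((M * d * β) ^ t * (P ^ (t+1)) v u) * β) :=
              mul_le_mul (hσ' _) hD (abs_nonneg _) hM
          _ = (M * d * β) ^ (t+1) * (P ^ (t+1)) v u := by
              rw [pow_succ]
              ring
  obtain ⟨C, hC, hCb⟩ := key (ℓ + 1)
  have hc : c = C v q := hderiv.unique (hC v q)
  rw [hc]
  exact hCb v q
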